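/- For every z in the open unit disc 𝔻 ⊆ ℂ, the function f_z : 𝔻 → ℂ defined by f_z(w) = (1 - |z|²)·w / (1 - conj(z)·w) is holomorphic on 𝔻, satisfies f_z(0) = 0, its Bloch seminorm sup_{w ∈ 𝔻} (1 - |w|²)·|f_z'(w)| equals 1, and moreover (1 - |z|²)·f_z'(z) = 1. -/

import Mathlib

open Complex Metric Set

/-- The Bloch seminorm of a map on the unit disc. -/
noncomputable def blochSeminorm {E : Type*} [NormedAddCommGroup E] [NormedSpace ℂ E]
    (f : ℂ → E) : ℝ :=
  ⨆ z : ball (0 : ℂ) 1, (1 - ‖(z : ℂ)‖ ^ 2) * ‖deriv f (z : ℂ)‖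

/-- The extremal Bloch function `f_z(w) = (1-|z|²)w / (1 - conj z · w)`. -/
noncomputable def fz (z : ℂ) : ℂ → ℂ :=
  fun w => ((1 - ‖z‖ ^ 2 : ℝ) : ℂ) * w / (1 - (starRingEnd ℂ) z * w)

lemma den_ne (z w : ℂ) (hz : ‖z‖ < 1) (hw : ‖w‖ < 1) :
    (1 : ℂ) - (starRingEnd ℂ) z * w ≠ 0 := by
  intro h
  have h1 : (1 : ℂ) = (starRingEnd ℂ) z * w := by linear_combination h
  have : (1 : ℝ) = ‖(starRingEnd ℂ) z * w‖ := by rw [← h1]; simp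
  have h2 : ‖(starRingEnd ℂ) z * w‖ < 1 := by
    rw [norm_mul, RCLike.norm_conj]
    nlinarith [norm_nonneg z, norm_nonneg w]
  linarith [this ▸ h2]

lemma fz_hasDerivAt (z w : ℂ) (h : (1 : ℂ) - (starRingEnd ℂ) z * w ≠ 0) :
    HasDerivAt (fz z) (((1 - ‖z‖ ^ 2 : ℝ) : ℂ) / (1 - (starRingEnd ℂ) z * w) ^ 2) w := by
  have h1 : HasDerivAt (fun w : ℂ => ((1 - ‖z‖ ^ 2 : ℝ) : ℂ) * w) ((1 - ‖z‖ ^ 2 : ℝ) : ℂ) w := by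
    simpa only [mul_one, id_eq] using (hasDerivAt_id w).const_mul (((1 - ‖z‖ ^ 2 : ℝ) : ℂ))
  have h2 : HasDerivAt (fun w : ℂ => (1 : ℂ) - (starRingEnd ℂ) z * w) (-(starRingEnd ℂ) z) w := by
    simpa using ((hasDerivAt_id w).const_mul ((starRingEnd ℂ) z)).const_sub 1
  have := h1.div h2 h
  convert this using 1
  · rfl
  · rfl
  · rfl
  ring

lemma normSq_key (z w : ℂ) :
    Complex.normSq (1 - (starRingEnd ℂ) z * w)
      = (1 - Complex.normSq z) * (1 - Complex.normSq w) + Complex.normSq (z - w) := by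
  simp only [Complex.normSq_apply, Complex.sub_re, Complex.sub_im, Complex.mul_re,
    Complex.mul_im, Complex.one_re, Complex.one_im, Complex.conj_re, Complex.conj_im]
  ring

theorem stmt0 (z : ℂ) (hz : z ∈ ball (0 : ℂ) 1) :
    DifferentiableOn ℂ (fz z) (ball (0 : ℂ) 1) ∧
    fz z 0 = 0 ∧
    blochSeminorm (fz z) = 1 ∧
    ((1 - ‖z‖ ^ 2 : ℝ) : ℂ) * deriv (fz z) z = 1 := by
  simp only [mem_ball, dist_zero_right] at hz
  have hzpos : (0:ℝ) < 1 - ‖z‖ ^ 2 := by nlinarith [norm_nonneg z]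
  have hden : ∀ w : ℂ, ‖w‖ < 1 → (1 : ℂ) - (starRingEnd ℂ) z * w ≠ 0 :=
    fun w hw => den_ne z w hz hw
  -- deriv formula on the ball
  have hderiv : ∀ w : ℂ, ‖w‖ < 1 →
      deriv (fz z) w = ((1 - ‖z‖ ^ 2 : ℝ) : ℂ) / (1 - (starRingEnd ℂ) z * w) ^ 2 :=
    fun w hw => (fz_hasDerivAt z w (hden w hw)).deriv
  have hdenz : (1 : ℂ) - (starRingEnd ℂ) z * z = ((1 - ‖z‖ ^ 2 : ℝ) : ℂ) := by
    rw [Complex.conj_mul']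
    push_cast
    ring
  refine ⟨?_, ?_, ?_, ?_⟩
  · intro w hw
    simp only [mem_ball, dist_zero_right] at hw
    exact (fz_hasDerivAt z w (hden w hw)).differentiableAt.differentiableWithinAt
  · simp [fz]
  · -- blochSeminorm = 1
    have hval : ∀ w : ℂ, ‖w‖ < 1 →
        (1 - ‖w‖ ^ 2) * ‖deriv (fz z) w‖
          = (1 - ‖w‖ ^ 2) * (1 - ‖z‖ ^ 2) / ‖(1 : ℂ) - (starRingEnd ℂ) z * w‖ ^ 2 := by
      intro w hw
      rw [hderiv w hw, norm_div, norm_pow]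
      rw [Complex.norm_real, Real.norm_of_nonneg (le_of_lt hzpos)]
      ring
    have hle : ∀ w : ℂ, ‖w‖ < 1 → (1 - ‖w‖ ^ 2) * ‖deriv (fz z) w‖ ≤ 1 := by
      intro w hw
      rw [hval w hw]
      have hd := hden w hw
      have hdpos : (0:ℝ) < ‖(1 : ℂ) - (starRingEnd ℂ) z * w‖ ^ 2 :=
        pow_pos (norm_pos_iff.2 hd) 2
      rw [div_le_one hdpos]
      have := normSq_key z w
      have h1 : ‖(1 : ℂ) - (starRingEnd ℂ) z * w‖ ^ 2 = Complex.normSq (1 - (starRingEnd ℂ) z * w) := by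
        rw [← Complex.sq_norm]
      rw [h1, this, Complex.normSq_eq_norm_sq, Complex.normSq_eq_norm_sq]
      have := Complex.normSq_nonneg (z - w)
      nlinarith
    apply le_antisymm
    · apply Real.iSup_le _ zero_le_one
      rintro ⟨w, hw⟩
      simp only [mem_ball, dist_zero_right] at hw
      exact hle w hw
    · have hzb : z ∈ ball (0:ℂ) 1 := by simpa [mem_ball, dist_zero_right] using hz
      have : (1 - ‖z‖ ^ 2) * ‖deriv (fz z) z‖ = 1 := by
        rw [hval z hz, hdenz, Complex.norm_real, Real.norm_of_nonneg (le_of_lt hzpos)]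
        rw [← sq, div_self (ne_of_gt (pow_pos hzpos 2))]
      calc (1:ℝ) = (1 - ‖z‖ ^ 2) * ‖deriv (fz z) z‖ := this.symm
        _ ≤ blochSeminorm (fz z) := by
            refine le_ciSup (f := fun w : ball (0:ℂ) 1 =>
              (1 - ‖(w:ℂ)‖ ^ 2) * ‖deriv (fz z) (w:ℂ)‖) ⟨1, ?_⟩ ⟨z, hzb⟩
            rintro x ⟨⟨w, hw⟩, rfl⟩
            simp only [mem_ball, dist_zero_right] at hw
            exact hle w hw
  · rw [hderiv z hz, hdenz]
    have hC : ((1 - ‖z‖ ^ 2 : ℝ) : ℂ) ≠ 0 := by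
      exact_mod_cast ne_of_gt hzpos
    rw [← mul_div_assoc, ← sq, div_self (pow_ne_zero 2 hC)]
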